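/- (Lemma 3, path-complete stability criterion.) Let V₁, V₂ : (ℝⁿ)^{d_M+1} → ℝ be positive definite quadratic forms, i.e. V_j(x̄) = x̄ᵀS_jx̄ for symmetric positive definite matrices S₁, S₂ ∈ ℝ^{n(d_M+1)×n(d_M+1)}. For each integer l with d_m ≤ l ≤ d_M define the linear update map G_l : (ℝⁿ)^{d_M+1} → (ℝⁿ)^{d_M+1} by G_l(x̄₀, …, x̄_{d_M}) = (A x̄₀ + A_n x̄_{d_n} + A_d x̄_l, x̄₀, …, x̄_{d_M−1}). Suppose that for every nonzero x̄ ∈ (ℝⁿ)^{d_M+1}: (i) for every integer l with d_m ≤ l ≤ d_n, both V₁(G_l(x̄)) < V₁(x̄) and V₁(G_l(x̄)) < V₂(x̄); and (ii) for every integer l with d_n < l ≤ d_M, both V₂(G_l(x̄)) < V₂(x̄) and V₂(G_l(x̄)) < V₁(x̄). Then every solution of the delay system, for every admissible delay signal, satisfies x(k) → 0 as k → ∞. -/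

import Mathlib

open Matrix Filter

/-- Padded access to the coordinates of a point of `(ℝⁿ)^{d_M+1}` by natural indices. -/
def pad (n d_M : ℕ) (xb : Fin (d_M + 1) → Fin n → ℝ) : ℕ → Fin n → ℝ :=
  fun i => if h : i < d_M + 1 then xb ⟨i, h⟩ else 0

/-- Flattening of a point of `(ℝⁿ)^{d_M+1}` into a vector of `ℝ^{n(d_M+1)}`. -/
def flat (n d_M : ℕ) (xb : Fin (d_M + 1) → Fin n → ℝ) : Fin (d_M + 1) × Fin n → ℝ :=
  fun p => xb p.1 p.2

/-- The quadratic functional `x̄ ↦ x̄ᵀSx̄`. -/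
noncomputable def Vq (n d_M : ℕ)
    (S : Matrix (Fin (d_M + 1) × Fin n) (Fin (d_M + 1) × Fin n) ℝ)
    (xb : Fin (d_M + 1) → Fin n → ℝ) : ℝ :=
  flat n d_M xb ⬝ᵥ S *ᵥ flat n d_M xb

/-- The linear update map
`G_l(x̄₀, …, x̄_{d_M}) = (A x̄₀ + A_n x̄_{d_n} + A_d x̄_l, x̄₀, …, x̄_{d_M−1})`. -/
noncomputable def Gmap (n d_n d_M : ℕ) (A An Ad : Matrix (Fin n) (Fin n) ℝ) (l : ℕ)
    (xb : Fin (d_M + 1) → Fin n → ℝ) : Fin (d_M + 1) → Fin n → ℝ :=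
  fun i => if (i : ℕ) = 0 then
      A *ᵥ pad n d_M xb 0 + An *ᵥ pad n d_M xb d_n + Ad *ᵥ pad n d_M xb l
    else pad n d_M xb ((i : ℕ) - 1)

section aux

/-- Ratio bound for 2-homogeneous functions via compactness of the sphere. -/
theorem quad_ratio {E : Type} [NormedAddCommGroup E] [NormedSpace ℝ E]
    [FiniteDimensional ℝ E] [Nontrivial E] (f g : E → ℝ)
    (hf : Continuous f) (hg : Continuous g)
    (hfh : ∀ (c : ℝ) (x : E), f (c • x) = c ^ 2 * f x)
    (hgh : ∀ (c : ℝ) (x : E), g (c • x) = c ^ 2 * g x)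
    (hgpos : ∀ x : E, x ≠ 0 → 0 < g x)
    (hlt : ∀ x : E, x ≠ 0 → f x < g x) :
    ∃ ρ : ℝ, ρ < 1 ∧ ∀ x : E, f x ≤ ρ * g x := by
  have hsc : IsCompact (Metric.sphere (0 : E) 1) := isCompact_sphere 0 1
  have hsne : (Metric.sphere (0 : E) 1).Nonempty :=
    NormedSpace.sphere_nonempty.mpr zero_le_one
  have hmem : ∀ x ∈ Metric.sphere (0 : E) 1, x ≠ 0 := by
    intro x hx h0
    rw [mem_sphere_zero_iff_norm] at hx
    simp [h0] at hx
  have hcont : ContinuousOn (fun x => f x / g x) (Metric.sphere (0 : E) 1) :=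
    hf.continuousOn.div hg.continuousOn (fun x hx => (hgpos x (hmem x hx)).ne')
  obtain ⟨x₀, hx₀s, hmax⟩ := hsc.exists_isMaxOn hsne hcont
  refine ⟨f x₀ / g x₀, (div_lt_one (hgpos x₀ (hmem x₀ hx₀s))).mpr (hlt x₀ (hmem x₀ hx₀s)), ?_⟩
  intro x
  rcases eq_or_ne x 0 with rfl | hx
  · have hf0 : f 0 = 0 := by have := hfh 0 0; simpa using this
    have hg0 : g 0 = 0 := by have := hgh 0 0; simpa using this
    simp [hf0, hg0]
  · have hrpos : (0 : ℝ) < ‖x‖ := norm_pos_iff.mpr hx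
    obtain ⟨u, hu⟩ : ∃ u : E, u = ‖x‖⁻¹ • x := ⟨_, rfl⟩
    have hun : ‖u‖ = 1 := by
      rw [hu, norm_smul, norm_inv, norm_norm, inv_mul_cancel₀ hrpos.ne']
    have hus : u ∈ Metric.sphere (0 : E) 1 := by
      rw [mem_sphere_zero_iff_norm]; exact hun
    have hxu : x = ‖x‖ • u := by
      rw [hu, smul_smul, mul_inv_cancel₀ hrpos.ne', one_smul]
    have hle : f u / g u ≤ f x₀ / g x₀ := hmax hus
    have hgu : 0 < g u := hgpos u (hmem u hus)
    have hfu : f u ≤ f x₀ / g x₀ * g u := (div_le_iff₀ hgu).mp hle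
    have hfx : f x = ‖x‖ ^ 2 * f u := by conv_lhs => rw [hxu, hfh]
    have hgx : g x = ‖x‖ ^ 2 * g u := by conv_lhs => rw [hxu, hgh]
    rw [hfx, hgx]
    calc ‖x‖ ^ 2 * f u ≤ ‖x‖ ^ 2 * (f x₀ / g x₀ * g u) :=
          mul_le_mul_of_nonneg_left hfu (sq_nonneg _)
      _ = f x₀ / g x₀ * (‖x‖ ^ 2 * g u) := by ring

/-- Lower bound for positive 2-homogeneous functions via compactness of the sphere. -/
theorem quad_lower {E : Type} [NormedAddCommGroup E] [NormedSpace ℝ E]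
    [FiniteDimensional ℝ E] [Nontrivial E] (g : E → ℝ)
    (hg : Continuous g)
    (hgh : ∀ (c : ℝ) (x : E), g (c • x) = c ^ 2 * g x)
    (hgpos : ∀ x : E, x ≠ 0 → 0 < g x) :
    ∃ c : ℝ, 0 < c ∧ ∀ x : E, c * ‖x‖ ^ 2 ≤ g x := by
  have hsc : IsCompact (Metric.sphere (0 : E) 1) := isCompact_sphere 0 1
  have hsne : (Metric.sphere (0 : E) 1).Nonempty :=
    NormedSpace.sphere_nonempty.mpr zero_le_one
  have hmem : ∀ x ∈ Metric.sphere (0 : E) 1, x ≠ 0 := by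
    intro x hx h0
    rw [mem_sphere_zero_iff_norm] at hx
    simp [h0] at hx
  obtain ⟨x₀, hx₀s, hmin⟩ := hsc.exists_isMinOn hsne hg.continuousOn
  refine ⟨g x₀, hgpos x₀ (hmem x₀ hx₀s), ?_⟩
  intro x
  rcases eq_or_ne x 0 with rfl | hx
  · have hg0 : g 0 = 0 := by have := hgh 0 0; simpa using this
    simp [hg0]
  · have hrpos : (0 : ℝ) < ‖x‖ := norm_pos_iff.mpr hx
    obtain ⟨u, hu⟩ : ∃ u : E, u = ‖x‖⁻¹ • x := ⟨_, rfl⟩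
    have hun : ‖u‖ = 1 := by
      rw [hu, norm_smul, norm_inv, norm_norm, inv_mul_cancel₀ hrpos.ne']
    have hus : u ∈ Metric.sphere (0 : E) 1 := by
      rw [mem_sphere_zero_iff_norm]; exact hun
    have hxu : x = ‖x‖ • u := by
      rw [hu, smul_smul, mul_inv_cancel₀ hrpos.ne', one_smul]
    have hle : g x₀ ≤ g u := hmin hus
    have hgx : g x = ‖x‖ ^ 2 * g u := by conv_lhs => rw [hxu, hgh]
    rw [hgx]
    calc g x₀ * ‖x‖ ^ 2 ≤ g u * ‖x‖ ^ 2 := mul_le_mul_of_nonneg_right hle (sq_nonneg _)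
      _ = ‖x‖ ^ 2 * g u := by ring

variable {n d_m d_n d_M : ℕ}

lemma pad_smul (c : ℝ) (xb : Fin (d_M + 1) → Fin n → ℝ) (m : ℕ) :
    pad n d_M (c • xb) m = c • pad n d_M xb m := by
  unfold pad; split <;> simp

lemma Gmap_smul (A An Ad : Matrix (Fin n) (Fin n) ℝ) (l : ℕ) (c : ℝ)
    (xb : Fin (d_M + 1) → Fin n → ℝ) :
    Gmap n d_n d_M A An Ad l (c • xb) = c • Gmap n d_n d_M A An Ad l xb := by
  funext i
  simp only [Gmap, Pi.smul_apply]
  split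
  · simp [pad_smul, Matrix.mulVec_smul, smul_add]
  · simp [pad_smul]

lemma Vq_smul (S : Matrix (Fin (d_M + 1) × Fin n) (Fin (d_M + 1) × Fin n) ℝ)
    (c : ℝ) (xb : Fin (d_M + 1) → Fin n → ℝ) :
    Vq n d_M S (c • xb) = c ^ 2 * Vq n d_M S xb := by
  have hfl : flat n d_M (c • xb) = c • flat n d_M xb := by
    funext p; simp [flat]
  simp only [Vq, hfl, Matrix.mulVec_smul, smul_dotProduct, dotProduct_smul,
    smul_eq_mul]
  ring

lemma Vq_continuous (S : Matrix (Fin (d_M + 1) × Fin n) (Fin (d_M + 1) × Fin n) ℝ) :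
    Continuous (Vq n d_M S) := by
  unfold Vq flat
  simp only [dotProduct, Matrix.mulVec]
  apply continuous_finset_sum
  intro p _
  fun_prop

lemma pad_continuous (m : ℕ) : Continuous fun xb : Fin (d_M + 1) → Fin n → ℝ =>
    pad n d_M xb m := by
  unfold pad; split
  · exact continuous_apply _
  · exact continuous_const

lemma Gmap_continuous (A An Ad : Matrix (Fin n) (Fin n) ℝ) (l : ℕ) :
    Continuous (Gmap n d_n d_M A An Ad l) := by
  apply continuous_pi
  intro i
  unfold Gmap
  by_cases h : (i : ℕ) = 0 <;> simp only [h, if_true, if_false, reduceIte]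
  · have hm : ∀ (B : Matrix (Fin n) (Fin n) ℝ) (m : ℕ),
        Continuous fun xb : Fin (d_M + 1) → Fin n → ℝ => B *ᵥ pad n d_M xb m := by
      intro B m
      exact B.mulVecLin.continuous_of_finiteDimensional.comp (pad_continuous m)
    exact ((hm A 0).add (hm An d_n)).add (hm Ad l)
  · exact pad_continuous _

lemma flat_ne_zero {xb : Fin (d_M + 1) → Fin n → ℝ} (h : xb ≠ 0) :
    flat n d_M xb ≠ 0 := by
  intro hf
  apply h
  funext i j
  exact congrFun hf (i, j)

lemma Vq_zero (S : Matrix (Fin (d_M + 1) × Fin n) (Fin (d_M + 1) × Fin n) ℝ) :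
    Vq n d_M S (0 : Fin (d_M + 1) → Fin n → ℝ) = 0 := by
  have : flat n d_M (0 : Fin (d_M + 1) → Fin n → ℝ) = 0 := by funext p; simp [flat]
  simp [Vq, this]

end aux

/-- **Lemma 3 (path-complete stability criterion).**
Let `V₁, V₂` be positive definite quadratic forms on `(ℝⁿ)^{d_M+1}`. If, for every nonzero
`x̄`, (i) `V₁(G_l(x̄)) < V₁(x̄)` and `V₁(G_l(x̄)) < V₂(x̄)` for all integers `d_m ≤ l ≤ d_n`,
and (ii) `V₂(G_l(x̄)) < V₂(x̄)` and `V₂(G_l(x̄)) < V₁(x̄)` for all integers `d_n < l ≤ d_M`,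
then every solution of the delay system, for every admissible delay signal, satisfies
`x(k) → 0` as `k → ∞`. -/
theorem path_complete_stability
    (n d_m d_n d_M : ℕ) (hn : 1 ≤ n) (hdm : 1 ≤ d_m) (hmn : d_m ≤ d_n) (hnM : d_n ≤ d_M)
    (A An Ad : Matrix (Fin n) (Fin n) ℝ)
    (S₁ S₂ : Matrix (Fin (d_M + 1) × Fin n) (Fin (d_M + 1) × Fin n) ℝ)
    (hS₁s : S₁.IsSymm)
    (hS₁pd : ∀ v : Fin (d_M + 1) × Fin n → ℝ, v ≠ 0 → 0 < v ⬝ᵥ S₁ *ᵥ v)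
    (hS₂s : S₂.IsSymm)
    (hS₂pd : ∀ v : Fin (d_M + 1) × Fin n → ℝ, v ≠ 0 → 0 < v ⬝ᵥ S₂ *ᵥ v)
    (hmode1 : ∀ l : ℕ, d_m ≤ l → l ≤ d_n →
      ∀ xb : Fin (d_M + 1) → Fin n → ℝ, xb ≠ 0 →
        Vq n d_M S₁ (Gmap n d_n d_M A An Ad l xb) < Vq n d_M S₁ xb ∧
        Vq n d_M S₁ (Gmap n d_n d_M A An Ad l xb) < Vq n d_M S₂ xb)
    (hmode2 : ∀ l : ℕ, d_n < l → l ≤ d_M →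
      ∀ xb : Fin (d_M + 1) → Fin n → ℝ, xb ≠ 0 →
        Vq n d_M S₂ (Gmap n d_n d_M A An Ad l xb) < Vq n d_M S₂ xb ∧
        Vq n d_M S₂ (Gmap n d_n d_M A An Ad l xb) < Vq n d_M S₁ xb)
    (x : ℤ → Fin n → ℝ) (d : ℕ → ℤ)
    (hd : ∀ k : ℕ, (d_m : ℤ) ≤ d k ∧ d k ≤ (d_M : ℤ))
    (hx : ∀ k : ℕ, x ((k : ℤ) + 1)
      = A *ᵥ x (k : ℤ) + An *ᵥ x ((k : ℤ) - (d_n : ℤ)) + Ad *ᵥ x ((k : ℤ) - d k)) :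
    Tendsto (fun k : ℕ => x (k : ℤ)) atTop (nhds 0) := by
  haveI hNT : Nontrivial (Fin (d_M + 1) → Fin n → ℝ) := by
    refine ⟨0, (fun _ _ => 1), fun h => ?_⟩
    have := congrFun (congrFun h ⟨0, Nat.succ_pos _⟩) ⟨0, hn⟩
    simpa using this
  -- positivity of the quadratic forms
  have hV1pos : ∀ xb : Fin (d_M + 1) → Fin n → ℝ, xb ≠ 0 → 0 < Vq n d_M S₁ xb :=
    fun xb h => hS₁pd _ (flat_ne_zero h)
  have hV2pos : ∀ xb : Fin (d_M + 1) → Fin n → ℝ, xb ≠ 0 → 0 < Vq n d_M S₂ xb :=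
    fun xb h => hS₂pd _ (flat_ne_zero h)
  have hV1nn : ∀ xb : Fin (d_M + 1) → Fin n → ℝ, 0 ≤ Vq n d_M S₁ xb := by
    intro xb; rcases eq_or_ne xb 0 with rfl | h
    · rw [Vq_zero]
    · exact (hV1pos xb h).le
  have hV2nn : ∀ xb : Fin (d_M + 1) → Fin n → ℝ, 0 ≤ Vq n d_M S₂ xb := by
    intro xb; rcases eq_or_ne xb 0 with rfl | h
    · rw [Vq_zero]
    · exact (hV2pos xb h).le
  -- the "min" comparison function
  set g : (Fin (d_M + 1) → Fin n → ℝ) → ℝ :=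
    fun xb => min (Vq n d_M S₁ xb) (Vq n d_M S₂ xb) with hgdef
  have hgcont : Continuous g := (Vq_continuous S₁).min (Vq_continuous S₂)
  have hgh : ∀ (c : ℝ) xb, g (c • xb) = c ^ 2 * g xb := by
    intro c xb
    simp only [hgdef, Vq_smul]
    rw [mul_min_of_nonneg _ _ (sq_nonneg c)]
  have hgpos : ∀ xb, xb ≠ 0 → 0 < g xb := fun xb h =>
    lt_min (hV1pos xb h) (hV2pos xb h)
  have hgnn : ∀ xb, 0 ≤ g xb := fun xb => le_min (hV1nn xb) (hV2nn xb)
  -- the matrix used after a step with delay l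
  set Tl : ℕ → Matrix (Fin (d_M + 1) × Fin n) (Fin (d_M + 1) × Fin n) ℝ :=
    fun l => if l ≤ d_n then S₁ else S₂ with hTl
  -- key: uniform contraction factor for each admissible l
  have key : ∀ l : ℕ, d_m ≤ l → l ≤ d_M → ∃ ρ : ℝ, ρ < 1 ∧
      ∀ xb, Vq n d_M (Tl l) (Gmap n d_n d_M A An Ad l xb) ≤ ρ * g xb := by
    intro l hl1 hl2
    refine quad_ratio (fun xb => Vq n d_M (Tl l) (Gmap n d_n d_M A An Ad l xb)) g
      ((Vq_continuous (Tl l)).comp (Gmap_continuous A An Ad l)) hgcont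
      (fun c xb => by simp only [Gmap_smul, Vq_smul]) hgh hgpos ?_
    intro xb hxb
    by_cases hln : l ≤ d_n
    · obtain ⟨h1, h2⟩ := hmode1 l hl1 hln xb hxb
      simp only [hTl, if_pos hln, Function.comp]
      exact lt_min h1 h2
    · obtain ⟨h1, h2⟩ := hmode2 l (not_le.mp hln) hl2 xb hxb
      simp only [hTl, if_neg hln, Function.comp]
      exact lt_min h2 h1
  choose! ρ hρ1 hρ2 using key
  have hmM : d_m ≤ d_M := le_trans hmn hnM
  have hLne : (Finset.Icc d_m d_M).Nonempty := ⟨d_m, by simp [Finset.mem_Icc, hmM]⟩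
  set ρ' : ℝ := max 0 ((Finset.Icc d_m d_M).sup' hLne ρ) with hρ'
  have hρ'0 : 0 ≤ ρ' := le_max_left _ _
  have hρ'1 : ρ' < 1 := by
    apply max_lt one_pos
    rw [Finset.sup'_lt_iff]
    intro l hl
    rw [Finset.mem_Icc] at hl
    exact hρ1 l hl.1 hl.2
  have key' : ∀ l : ℕ, d_m ≤ l → l ≤ d_M →
      ∀ xb, Vq n d_M (Tl l) (Gmap n d_n d_M A An Ad l xb) ≤ ρ' * g xb := by
    intro l h1 h2 xb
    refine le_trans (hρ2 l h1 h2 xb) (mul_le_mul_of_nonneg_right ?_ (hgnn xb))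
    exact le_trans (Finset.le_sup' ρ (Finset.mem_Icc.mpr ⟨h1, h2⟩)) (le_max_right _ _)
  -- the state trajectory
  set X : ℕ → Fin (d_M + 1) → Fin n → ℝ :=
    fun k i => x ((k : ℤ) - ((i : ℕ) : ℤ)) with hX
  have hdk' : ∀ k, d_m ≤ (d k).toNat ∧ (d k).toNat ≤ d_M := by
    intro k; obtain ⟨h1, h2⟩ := hd k; omega
  have hdkcast : ∀ k, (((d k).toNat : ℤ)) = d k := by
    intro k; obtain ⟨h1, h2⟩ := hd k; omega
  have hstep : ∀ k : ℕ, X (k + 1) = Gmap n d_n d_M A An Ad (d k).toNat (X k) := by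
    intro k
    funext i
    by_cases hi : (i : ℕ) = 0
    · have hXl : X (k + 1) i = x ((k : ℤ) + 1) := by
        simp [hX, hi]
      rw [hXl, hx k]
      simp only [Gmap, if_pos hi, pad]
      rw [dif_pos (Nat.succ_pos d_M), dif_pos (by omega : d_n < d_M + 1),
        dif_pos (by have := hdk' k; omega : (d k).toNat < d_M + 1)]
      simp only [hX]
      rw [hdkcast k]
      norm_num
    · have h1 : 1 ≤ (i : ℕ) := Nat.one_le_iff_ne_zero.mpr hi
      have harg : (((k + 1 : ℕ)) : ℤ) - ((i : ℕ) : ℤ)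
          = (k : ℤ) - (((i : ℕ) - 1 : ℕ) : ℤ) := by omega
      have hXl : X (k + 1) i = x ((k : ℤ) - (((i : ℕ) - 1 : ℕ) : ℤ)) := by
        simp only [hX]
        rw [harg]
      rw [hXl]
      simp only [Gmap, if_neg hi, pad]
      rw [dif_pos (by omega : (i : ℕ) - 1 < d_M + 1)]
  -- the switching Lyapunov function
  set Sσ : ℕ → Matrix (Fin (d_M + 1) × Fin n) (Fin (d_M + 1) × Fin n) ℝ :=
    fun k => match k with
      | 0 => S₁
      | (k + 1) => Tl (d k).toNat with hSσ
  set W : ℕ → ℝ := fun k => Vq n d_M (Sσ k) (X k) with hW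
  have hSσcases : ∀ k, Sσ k = S₁ ∨ Sσ k = S₂ := by
    intro k
    cases k with
    | zero => left; rfl
    | succ k =>
      simp only [hSσ, hTl]
      split
      · left; rfl
      · right; rfl
  have hgW : ∀ k, g (X k) ≤ W k := by
    intro k
    have hWk : W k = Vq n d_M (Sσ k) (X k) := rfl
    rcases hSσcases k with h | h <;> rw [hWk, h]
    · exact min_le_left _ _
    · exact min_le_right _ _
  have hWstep : ∀ k, W (k + 1) ≤ ρ' * W k := by
    intro k
    obtain ⟨h1, h2⟩ := hdk' k
    have : W (k + 1) = Vq n d_M (Tl (d k).toNat) (Gmap n d_n d_M A An Ad (d k).toNat (X k)) := by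
      rw [hW]
      simp only [hSσ]
      rw [hstep k]
    rw [this]
    exact le_trans (key' _ h1 h2 (X k)) (mul_le_mul_of_nonneg_left (hgW k) hρ'0)
  have hWk : ∀ k, W k ≤ ρ' ^ k * W 0 := by
    intro k
    induction k with
    | zero => simp
    | succ k ih =>
      calc W (k + 1) ≤ ρ' * W k := hWstep k
        _ ≤ ρ' * (ρ' ^ k * W 0) := mul_le_mul_of_nonneg_left ih hρ'0
        _ = ρ' ^ (k + 1) * W 0 := by ring
  -- lower bound
  obtain ⟨c₁, hc₁, hlb₁⟩ := quad_lower (Vq n d_M S₁) (Vq_continuous S₁)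
    (fun c xb => Vq_smul S₁ c xb) hV1pos
  obtain ⟨c₂, hc₂, hlb₂⟩ := quad_lower (Vq n d_M S₂) (Vq_continuous S₂)
    (fun c xb => Vq_smul S₂ c xb) hV2pos
  set c : ℝ := min c₁ c₂ with hc
  have hcpos : 0 < c := lt_min hc₁ hc₂
  have hlbW : ∀ k, c * ‖X k‖ ^ 2 ≤ W k := by
    intro k
    have hWk : W k = Vq n d_M (Sσ k) (X k) := rfl
    rcases hSσcases k with h | h <;> rw [hWk, h]
    · exact le_trans (mul_le_mul_of_nonneg_right (min_le_left _ _) (sq_nonneg _)) (hlb₁ _)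
    · exact le_trans (mul_le_mul_of_nonneg_right (min_le_right _ _) (sq_nonneg _)) (hlb₂ _)
  -- convergence
  have hbound : ∀ k, ‖X k‖ ^ 2 ≤ c⁻¹ * (W 0) * ρ' ^ k := by
    intro k
    have h := le_trans (hlbW k) (hWk k)
    have h2 : ‖X k‖ ^ 2 ≤ c⁻¹ * (ρ' ^ k * W 0) := by
      rw [← mul_le_mul_iff_right₀ hcpos, ← mul_assoc, mul_inv_cancel₀ hcpos.ne', one_mul]
      exact h
    calc ‖X k‖ ^ 2 ≤ c⁻¹ * (ρ' ^ k * W 0) := h2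
      _ = c⁻¹ * W 0 * ρ' ^ k := by ring
  have htend : Tendsto (fun k : ℕ => c⁻¹ * W 0 * ρ' ^ k) atTop (nhds 0) := by
    have := (tendsto_pow_atTop_nhds_zero_of_lt_one hρ'0 hρ'1).const_mul (c⁻¹ * W 0)
    simpa using this
  have hsq : Tendsto (fun k : ℕ => ‖X k‖ ^ 2) atTop (nhds 0) :=
    squeeze_zero (fun k => sq_nonneg _) hbound htend
  have hnorm : Tendsto (fun k : ℕ => ‖X k‖) atTop (nhds 0) := by
    have h := (Real.continuous_sqrt.tendsto 0).comp hsq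
    rw [Real.sqrt_zero] at h
    refine h.congr fun k => ?_
    simp [Function.comp, Real.sqrt_sq (norm_nonneg _)]
  have hX0 : Tendsto X atTop (nhds 0) := tendsto_zero_iff_norm_tendsto_zero.mpr hnorm
  have h0lt : (0 : ℕ) < d_M + 1 := Nat.succ_pos _
  have hev : Tendsto (fun k => X k ⟨0, h0lt⟩) atTop
      (nhds ((0 : Fin (d_M + 1) → Fin n → ℝ) ⟨0, h0lt⟩)) :=
    ((continuous_apply (⟨0, h0lt⟩ : Fin (d_M + 1))).tendsto 0).comp hX0
  have hxe : (fun k : ℕ => x (k : ℤ)) = fun k => X k ⟨0, h0lt⟩ := by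
    funext k
    simp [hX]
  rw [hxe]
  simpa using hev
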